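/- Let q₁ and q₂ be PIBQFs with discriminants D₁ and D₂. There exists exactly one point z in the upper half-plane lying on both root geodesics ℓ_{q₁} and ℓ_{q₂} if and only if B_Δ(q₁,q₂)² < D₁D₂. -/

import Mathlib

/-- A binary quadratic form `[A,B,C]`, encoded as a triple of integers. -/
abbrev BQF := ℤ × ℤ × ℤ

/-- The discriminant `B² - 4AC` of a binary quadratic form `[A,B,C]`. -/
def disc (q : BQF) : ℤ := q.2.1 ^ 2 - 4 * q.1 * q.2.2

/-- A binary quadratic form is primitive if `gcd(A,B,C) = 1`. -/
def IsPrimitiveBQF (q : BQF) : Prop := Int.gcd q.1 (Int.gcd q.2.1 q.2.2) = 1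

/-- A primitive indefinite binary quadratic form: primitive, of positive
nonsquare discriminant. -/
def IsPIBQF (q : BQF) : Prop := IsPrimitiveBQF q ∧ 0 < disc q ∧ ¬ IsSquare (disc q)

abbrev SL2Z := Matrix.SpecialLinearGroup (Fin 2) ℤ

/-- The action of `SL(2,ℤ)` on binary quadratic forms:
`(γ ∘ q)(x,y) = q(ax + by, cx + dy)`. -/
def actForm (γ : SL2Z) (q : BQF) : BQF :=
  ((q.1 * (γ.1 0 0)^2 + q.2.1 * (γ.1 0 0) * (γ.1 1 0) + q.2.2 * (γ.1 1 0)^2),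
   (2 * q.1 * (γ.1 0 0) * (γ.1 0 1) + q.2.1 * ((γ.1 0 0) * (γ.1 1 1) + (γ.1 0 1) * (γ.1 1 0))
      + 2 * q.2.2 * (γ.1 1 0) * (γ.1 1 1)),
   (q.1 * (γ.1 0 1)^2 + q.2.1 * (γ.1 0 1) * (γ.1 1 1) + q.2.2 * (γ.1 1 1)^2))

/-- Equivalence of binary quadratic forms under `SL(2,ℤ)`. -/
def equivF (q q' : BQF) : Prop := ∃ γ : SL2Z, actForm γ q = q'

/-- `B_Δ(q₁,q₂) = B₁B₂ - 2A₁C₂ - 2A₂C₁`. -/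
def BΔ (q₁ q₂ : BQF) : ℤ := q₁.2.1 * q₂.2.1 - 2 * q₁.1 * q₂.2.2 - 2 * q₂.1 * q₁.2.2

/-- A fundamental discriminant. -/
def IsFundamentalDisc (D : ℤ) : Prop :=
  (D % 4 = 1 ∧ Squarefree D) ∨
    (∃ m : ℤ, D = 4 * m ∧ Squarefree m ∧ (m % 4 = 2 ∨ m % 4 = 3))

/-- The Kronecker symbol `(a / p)` for a prime `p`. -/
def kron (a : ℤ) (p : ℕ) : ℤ :=
  if p = 2 then (if a % 2 = 0 then 0 else if a % 8 = 1 ∨ a % 8 = 7 then 1 else -1)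
  else jacobiSym a p

/-- `ε(p)`: the nonzero value among the Kronecker symbols `(D₁/p)`, `(D₂/p)`. -/
def epsP (D₁ D₂ : ℤ) (p : ℕ) : ℤ := if kron D₁ p = 0 then kron D₂ p else kron D₁ p

/-- The multiplicative extension of `ε` to positive integers. -/
def epsMul (D₁ D₂ : ℤ) (d : ℕ) : ℤ :=
  d.factorization.prod fun p k => (epsP D₁ D₂ p) ^ k

/-- Pairs of primitive forms of discriminants `D₁, D₂` with `B_Δ = n`. -/
def PairSet (D₁ D₂ n : ℤ) : Type :=
  {p : BQF × BQF // IsPrimitiveBQF p.1 ∧ IsPrimitiveBQF p.2 ∧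
    disc p.1 = D₁ ∧ disc p.2 = D₂ ∧ BΔ p.1 p.2 = n}

/-- Simultaneous `SL(2,ℤ)`-equivalence of pairs. -/
def pairRel (D₁ D₂ n : ℤ) (x y : PairSet D₁ D₂ n) : Prop :=
  ∃ γ : SL2Z, actForm γ x.1.1 = y.1.1 ∧ actForm γ x.1.2 = y.1.2

/-- `p(n)`: the number of simultaneous equivalence classes of pairs of primitive
forms of discriminants `D₁, D₂` with `B_Δ = n`. -/
noncomputable def pCount (D₁ D₂ n : ℤ) : ℕ := Nat.card (Quot (pairRel D₁ D₂ n))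

/-- The root geodesic of an indefinite form, as a subset of the upper half plane. -/
def rootGeodesic (q : BQF) : Set ℂ :=
  {z : ℂ | 0 < z.im ∧
    (q.1 : ℝ) * Complex.normSq z + (q.2.1 : ℝ) * z.re + (q.2.2 : ℝ) = 0}

/-- The first root `(-B + √D)/(2A)` of a PIBQF. -/
noncomputable def firstRoot (q : BQF) : ℝ :=
  (-(q.2.1 : ℝ) + Real.sqrt (disc q)) / (2 * q.1)

/-- The second root `(-B - √D)/(2A)` of a PIBQF. -/
noncomputable def secondRoot (q : BQF) : ℝ :=
  (-(q.2.1 : ℝ) - Real.sqrt (disc q)) / (2 * q.1)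


/-- The leading coefficient of a PIBQF is nonzero. -/
lemma pibqf_A_ne_zero {q : BQF} (h : IsPIBQF q) : q.1 ≠ 0 := by
  intro hA
  exact h.2.2 ⟨q.2.1, by simp [disc, hA, sq]⟩

/-- Key identity: at a common point of the two geodesics,
`D₁D₂ - BΔ² = 4 E² y²` where `E = a₂b₁ - a₁b₂`. -/
lemma key_identity (a1 b1 c1 a2 b2 c2 x y : ℝ)
    (h1 : a1 * (x ^ 2 + y ^ 2) + b1 * x + c1 = 0)
    (h2 : a2 * (x ^ 2 + y ^ 2) + b2 * x + c2 = 0) :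
    (b1 ^ 2 - 4 * a1 * c1) * (b2 ^ 2 - 4 * a2 * c2)
      - (b1 * b2 - 2 * a1 * c2 - 2 * a2 * c1) ^ 2
      = 4 * (a2 * b1 - a1 * b2) ^ 2 * y ^ 2 := by
  linear_combination
    (-4 * a1 * (b2 ^ 2 - 4 * a2 * c2) + 4 * a2 * (b1 * b2 - 2 * a1 * c2 - 2 * a2 * c1)
      + 4 * a2 ^ 2 * (a1 * (x ^ 2 + y ^ 2) + b1 * x + c1)) * h1
    + (-4 * a2 * (b1 ^ 2 - 4 * a1 * c1) + 4 * a1 * (b1 * b2 - 2 * a1 * c2 - 2 * a2 * c1)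
      - 8 * a1 * a2 * (a1 * (x ^ 2 + y ^ 2) + b1 * x + c1)
      + 4 * a1 ^ 2 * (a2 * (x ^ 2 + y ^ 2) + b2 * x + c2)) * h2

/-- Unconditional resultant-type identity. -/
lemma res_identity (a1 b1 c1 a2 b2 c2 : ℝ) :
    (b1 ^ 2 - 4 * a1 * c1) * (b2 ^ 2 - 4 * a2 * c2)
      - (b1 * b2 - 2 * a1 * c2 - 2 * a2 * c1) ^ 2
      = -4 * (a2 * c1 - a1 * c2) ^ 2
        - 4 * (a2 * b1 - a1 * b2) * (b1 * c2 - b2 * c1) := by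
  ring

/-- Identity giving the height of the intersection point. -/
lemma height_identity (a1 b1 c1 a2 b2 c2 : ℝ) :
    4 * (-(a1 * (a1 * (a2 * c1 - a1 * c2) ^ 2
        - b1 * (a2 * c1 - a1 * c2) * (a2 * b1 - a1 * b2)
        + c1 * (a2 * b1 - a1 * b2) ^ 2)))
      = ((b1 ^ 2 - 4 * a1 * c1) * (b2 ^ 2 - 4 * a2 * c2)
          - (b1 * b2 - 2 * a1 * c2 - 2 * a2 * c1) ^ 2) * a1 ^ 2 := by
  ring

lemma mem_rootGeodesic_iff (q : BQF) (z : ℂ) :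
    z ∈ rootGeodesic q ↔ 0 < z.im ∧
      (q.1 : ℝ) * (z.re ^ 2 + z.im ^ 2) + (q.2.1 : ℝ) * z.re + (q.2.2 : ℝ) = 0 := by
  constructor <;> rintro ⟨h, h2⟩ <;> refine ⟨h, ?_⟩ <;>
    rw [Complex.normSq_apply] at * <;> linear_combination h2

/-- Proposition 5(i) of the paper.
The root geodesics of two PIBQFs `q₁, q₂` meet in exactly one point of the
upper half plane iff `B_Δ(q₁,q₂)² < D₁D₂`. -/
theorem rootGeodesics_unique_intersection_iff
    (q₁ q₂ : BQF) (h₁ : IsPIBQF q₁) (h₂ : IsPIBQF q₂) :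
    (∃! z : ℂ, z ∈ rootGeodesic q₁ ∧ z ∈ rootGeodesic q₂) ↔
      (BΔ q₁ q₂) ^ 2 < disc q₁ * disc q₂ := by
  have ha1z : q₁.1 ≠ 0 := pibqf_A_ne_zero h₁
  have ha2z : q₂.1 ≠ 0 := pibqf_A_ne_zero h₂
  obtain ⟨A1, B1, C1⟩ := q₁
  obtain ⟨A2, B2, C2⟩ := q₂
  obtain ⟨-, hd1, -⟩ := h₁
  obtain ⟨-, hd2, -⟩ := h₂
  have ha1 : (A1 : ℝ) ≠ 0 := Int.cast_ne_zero.mpr ha1z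
  have ha2 : (A2 : ℝ) ≠ 0 := Int.cast_ne_zero.mpr ha2z
  have hd1' : (0 : ℝ) < (B1 : ℝ) ^ 2 - 4 * A1 * C1 := by
    have h' : (0 : ℤ) < B1 ^ 2 - 4 * A1 * C1 := hd1
    exact_mod_cast h'
  have hd2' : (0 : ℝ) < (B2 : ℝ) ^ 2 - 4 * A2 * C2 := by
    have h' : (0 : ℤ) < B2 ^ 2 - 4 * A2 * C2 := hd2
    exact_mod_cast h'
  have key : ((BΔ (A1, B1, C1) (A2, B2, C2)) ^ 2 < disc (A1, B1, C1) * disc (A2, B2, C2)) ↔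
      ((B1 : ℝ) * B2 - 2 * A1 * C2 - 2 * A2 * C1) ^ 2 <
        ((B1 : ℝ) ^ 2 - 4 * A1 * C1) * ((B2 : ℝ) ^ 2 - 4 * A2 * C2) := by
    constructor
    · intro h
      have h' : ((BΔ (A1, B1, C1) (A2, B2, C2) ^ 2 : ℤ) : ℝ) <
          ((disc (A1, B1, C1) * disc (A2, B2, C2) : ℤ) : ℝ) := by exact_mod_cast h
      push_cast [BΔ, disc] at h'
      nlinarith [h']
    · intro h
      have h' : ((BΔ (A1, B1, C1) (A2, B2, C2) ^ 2 : ℤ) : ℝ) <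
          ((disc (A1, B1, C1) * disc (A2, B2, C2) : ℤ) : ℝ) := by
        push_cast [BΔ, disc]
        nlinarith [h]
      exact_mod_cast h'
  rw [key]
  constructor
  · rintro ⟨z, ⟨hz1, hz2⟩, huniq⟩
    rw [mem_rootGeodesic_iff] at hz1 hz2
    obtain ⟨hy, hL1⟩ := hz1
    obtain ⟨-, hL2⟩ := hz2
    have hkey := key_identity (A1 : ℝ) B1 C1 A2 B2 C2 z.re z.im hL1 hL2
    have hE : (A2 : ℝ) * B1 - (A1 : ℝ) * B2 ≠ 0 := by
      intro hE0
      have hF : (A2 : ℝ) * C1 - (A1 : ℝ) * C2 = 0 := by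
        linear_combination (A2 : ℝ) * hL1 - (A1 : ℝ) * hL2 - z.re * hE0
      -- the two geodesics coincide; construct two distinct common points
      set c : ℝ := -(B1 : ℝ) / (2 * A1) with hc
      have hrs : (0 : ℝ) < ((B1 : ℝ) ^ 2 - 4 * A1 * C1) / (4 * A1 ^ 2) := by
        apply div_pos hd1'
        positivity
      set r : ℝ := Real.sqrt (((B1 : ℝ) ^ 2 - 4 * A1 * C1) / (4 * A1 ^ 2)) with hrdef
      have hrpos : 0 < r := Real.sqrt_pos.mpr hrs
      have hr2 : r ^ 2 = ((B1 : ℝ) ^ 2 - 4 * A1 * C1) / (4 * A1 ^ 2) :=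
        Real.sq_sqrt hrs.le
      have h2ac : 2 * (A1 : ℝ) * c + B1 = 0 := by
        rw [hc]; field_simp; ring
      have hc1 : (A1 : ℝ) * (c ^ 2 + r ^ 2) + B1 * c + C1 = 0 := by
        rw [hc, hr2]; field_simp; ring
      have hc2 : (A1 : ℝ) * ((c + 3 * r / 5) ^ 2 + (4 * r / 5) ^ 2)
          + B1 * (c + 3 * r / 5) + C1 = 0 := by
        linear_combination hc1 + (3 * r / 5) * h2ac
      have hmem : ∀ x y : ℝ, 0 < y → (A1 : ℝ) * (x ^ 2 + y ^ 2) + B1 * x + C1 = 0 →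
          (⟨x, y⟩ : ℂ) ∈ rootGeodesic (A1, B1, C1) ∧
          (⟨x, y⟩ : ℂ) ∈ rootGeodesic (A2, B2, C2) := by
        intro x y hy0 hQ1
        have hQ2 : (A2 : ℝ) * (x ^ 2 + y ^ 2) + B2 * x + C2 = 0 := by
          have h : (A1 : ℝ) * ((A2 : ℝ) * (x ^ 2 + y ^ 2) + B2 * x + C2) = 0 := by
            linear_combination (A2 : ℝ) * hQ1 - x * hE0 - hF
          exact (mul_eq_zero.mp h).resolve_left ha1
        exact ⟨(mem_rootGeodesic_iff _ _).mpr ⟨hy0, hQ1⟩,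
          (mem_rootGeodesic_iff _ _).mpr ⟨hy0, hQ2⟩⟩
      have e1 := hmem c r hrpos hc1
      have e2 := hmem (c + 3 * r / 5) (4 * r / 5) (by linarith) hc2
      have heq : (⟨c, r⟩ : ℂ) = (⟨c + 3 * r / 5, 4 * r / 5⟩ : ℂ) :=
        (huniq _ e1).trans (huniq _ e2).symm
      have him : r = 4 * r / 5 := congrArg Complex.im heq
      linarith
    have hE2 : (0 : ℝ) < ((A2 : ℝ) * B1 - (A1 : ℝ) * B2) ^ 2 :=
      lt_of_le_of_ne (sq_nonneg _) (Ne.symm (pow_ne_zero 2 hE))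
    nlinarith [hkey, mul_pos (mul_pos (by norm_num : (0:ℝ) < 4) hE2) (mul_pos hy hy)]
  · intro hlt
    have hE : (A2 : ℝ) * B1 - (A1 : ℝ) * B2 ≠ 0 := by
      intro hE0
      have hres := res_identity (A1 : ℝ) B1 C1 A2 B2 C2
      have hz : ((A2 : ℝ) * B1 - (A1 : ℝ) * B2) * ((B1 : ℝ) * C2 - (B2 : ℝ) * C1) = 0 := by
        rw [hE0]; ring
      nlinarith [hres, hz, sq_nonneg ((A2 : ℝ) * C1 - (A1 : ℝ) * C2), hlt]
    have hE2 : (0 : ℝ) < ((A2 : ℝ) * B1 - (A1 : ℝ) * B2) ^ 2 :=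
      lt_of_le_of_ne (sq_nonneg _) (Ne.symm (pow_ne_zero 2 hE))
    set E : ℝ := (A2 : ℝ) * B1 - (A1 : ℝ) * B2 with hEdef
    set F : ℝ := (A2 : ℝ) * C1 - (A1 : ℝ) * C2 with hFdef
    set x0 : ℝ := -F / E with hx0
    set s : ℝ := (((B1 : ℝ) ^ 2 - 4 * A1 * C1) * ((B2 : ℝ) ^ 2 - 4 * A2 * C2)
        - ((B1 : ℝ) * B2 - 2 * A1 * C2 - 2 * A2 * C1) ^ 2) / (4 * E ^ 2) with hs
    have hspos : 0 < s := by
      apply div_pos (by linarith) (by linarith)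
    set y0 : ℝ := Real.sqrt s with hy0def
    have hy0 : 0 < y0 := Real.sqrt_pos.mpr hspos
    have hy0sq : y0 ^ 2 = s := Real.sq_sqrt hspos.le
    have hL1 : (A1 : ℝ) * (x0 ^ 2 + y0 ^ 2) + B1 * x0 + C1 = 0 := by
      rw [hy0sq, hx0, hs, hEdef, hFdef]
      field_simp [show (A2 : ℝ) * B1 - (A1 : ℝ) * B2 ≠ 0 from hE]
      ring
    have hEx : E * x0 + F = 0 := by
      rw [hx0]; field_simp; ring
    have hL2 : (A2 : ℝ) * (x0 ^ 2 + y0 ^ 2) + B2 * x0 + C2 = 0 := by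
      have h : (A1 : ℝ) * ((A2 : ℝ) * (x0 ^ 2 + y0 ^ 2) + B2 * x0 + C2) = 0 := by
        rw [hEdef, hFdef] at hEx
        linear_combination (A2 : ℝ) * hL1 - hEx
      exact (mul_eq_zero.mp h).resolve_left ha1
    refine ⟨⟨x0, y0⟩, ⟨(mem_rootGeodesic_iff _ _).mpr ⟨hy0, hL1⟩,
      (mem_rootGeodesic_iff _ _).mpr ⟨hy0, hL2⟩⟩, ?_⟩
    rintro w ⟨hw1, hw2⟩
    rw [mem_rootGeodesic_iff] at hw1 hw2
    obtain ⟨hwim, hw1⟩ := hw1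
    obtain ⟨-, hw2⟩ := hw2
    have hwx : w.re = x0 := by
      have h : E * w.re + F = 0 := by
        rw [hEdef, hFdef]
        linear_combination (A2 : ℝ) * hw1 - (A1 : ℝ) * hw2
      rw [hx0, eq_div_iff hE]
      linear_combination h
    have hwy : w.im = y0 := by
      rw [hwx] at hw1
      have h : (A1 : ℝ) * (w.im ^ 2 - y0 ^ 2) = 0 := by
        linear_combination hw1 - hL1
      have h2 : w.im ^ 2 - y0 ^ 2 = 0 := (mul_eq_zero.mp h).resolve_left ha1
      have h3 : (w.im - y0) * (w.im + y0) = 0 := by linear_combination h2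
      rcases mul_eq_zero.mp h3 with h4 | h4
      · linarith
      · linarith
    exact Complex.ext hwx hwy
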